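/- Let 0 < a_T, α, k, T be constants and suppose a metric space family d_t on a set X satisfies: there are maps p: X → ℙ¹ and s: ℙ¹ → X with p∘s = id, (ka_T)^{1/2} d_fs(y₀,y₁) ≤ d_t(s(y₀),s(y₁)) ≤ (ka_T + k(1+α)(T−t))^{1/2} d_fs(y₀,y₁) for all y₀,y₁, and sup_{y} diam(p^{−1}(y), d_t) → 0 as t → T⁻. Then for every x₀, x₁ ∈ X, |d_t(x₀,x₁) − (ka_T)^{1/2} d_fs(p(x₀),p(x₁))| → 0 uniformly as t → T⁻; in particular (X, d_t) converges in Gromov-Hausdorff topology to (ℙ¹, ka_T · ω_fs). -/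

import Mathlib

/-- abstraction of Lemma 6.3. Distances along a section s of p compare
with √(ka_T)·d_Y and the fibers of p uniformly shrink as t → T⁻; then
|d_t(x₀,x₁) − √(ka_T) d_Y(p(x₀),p(x₁))| → 0 uniformly as t → T⁻ (which gives
Gromov-Hausdorff convergence of (X,d_t) to (Y, ka_T-rescaled metric)). -/
theorem stmt18 {X Y : Type*} [MetricSpace Y] [CompactSpace Y]
    (k aT α T : ℝ) (hk : 0 < k) (haT : 0 < aT) (hα : 0 < α) (hT : 0 < T)
    (d : ℝ → X → X → ℝ)
    (hsymm : ∀ t (x₀ x₁ : X), d t x₀ x₁ = d t x₁ x₀)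
    (hnonneg : ∀ t (x₀ x₁ : X), 0 ≤ d t x₀ x₁)
    (hself : ∀ t (x : X), d t x x = 0)
    (htri : ∀ t (x₀ x₁ x₂ : X), d t x₀ x₂ ≤ d t x₀ x₁ + d t x₁ x₂)
    (p : X → Y) (s : Y → X) (hps : ∀ y : Y, p (s y) = y)
    (hcomp : ∀ t : ℝ, t < T → ∀ y₀ y₁ : Y,
      Real.sqrt (k * aT) * dist y₀ y₁ ≤ d t (s y₀) (s y₁) ∧
      d t (s y₀) (s y₁) ≤ Real.sqrt (k * aT + k * (1 + α) * (T - t)) * dist y₀ y₁)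
    (hfib : ∀ ε > (0:ℝ), ∃ t₀ < T, ∀ t : ℝ, t₀ ≤ t → t < T →
      ∀ x₀ x₁ : X, p x₀ = p x₁ → d t x₀ x₁ ≤ ε) :
    ∀ ε > (0:ℝ), ∃ t₀ < T, ∀ t : ℝ, t₀ ≤ t → t < T → ∀ x₀ x₁ : X,
      |d t x₀ x₁ - Real.sqrt (k * aT) * dist (p x₀) (p x₁)| ≤ ε := by

  intro ε hε
  by_cases hY : Nonempty Y
  · obtain ⟨y⟩ := hY
    -- bound the diameter of Y
    obtain ⟨C, hC⟩ : ∃ C : ℝ, ∀ y₀ y₁ : Y, dist y₀ y₁ ≤ C := by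
      obtain ⟨r, hr⟩ := (isCompact_univ (X := Y)).isBounded.subset_closedBall y
      refine ⟨2 * r, fun y₀ y₁ => ?_⟩
      have h₀ := hr (Set.mem_univ y₀)
      have h₁ := hr (Set.mem_univ y₁)
      simp only [Metric.mem_closedBall] at h₀ h₁
      calc dist y₀ y₁ ≤ dist y₀ y + dist y y₁ := dist_triangle _ _ _
        _ ≤ r + r := by rw [dist_comm y y₁]; linarith
        _ = 2 * r := by ring
    have hC0 : 0 ≤ C := le_trans dist_nonneg (hC y y)
    set η : ℝ := ε / (3 * (C + 1)) with hη_def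
    have hη : 0 < η := by positivity
    obtain ⟨t₁, ht₁T, ht₁⟩ := hfib (ε / 3) (by positivity)
    have hpos : 0 < η ^ 2 / (k * (1 + α)) := by positivity
    have ht₂T : T - η ^ 2 / (k * (1 + α)) < T := by linarith
    refine ⟨max t₁ (T - η ^ 2 / (k * (1 + α))), max_lt ht₁T ht₂T, fun t ht htT x₀ x₁ => ?_⟩
    have htf := ht₁ t (le_trans (le_max_left _ _) ht) htT
    have ht2 : T - η ^ 2 / (k * (1 + α)) ≤ t := le_trans (le_max_right _ _) ht
    -- sqrt bound
    have hsq : Real.sqrt (k * aT + k * (1 + α) * (T - t)) ≤ Real.sqrt (k * aT) + η := by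
      have h1 : k * (1 + α) * (T - t) ≤ η ^ 2 := by
        have hTt : T - t ≤ η ^ 2 / (k * (1 + α)) := by linarith [ht2]
        calc k * (1 + α) * (T - t) ≤ k * (1 + α) * (η ^ 2 / (k * (1 + α))) := by
              apply mul_le_mul_of_nonneg_left hTt; positivity
          _ = η ^ 2 := by field_simp
      have h2 : Real.sqrt (k * aT + k * (1 + α) * (T - t))
          ≤ Real.sqrt (k * aT + η ^ 2) := Real.sqrt_le_sqrt (by linarith)
      refine h2.trans ?_
      have hs1 := Real.sqrt_nonneg (k * aT)
      have hs2 := Real.sq_sqrt (by positivity : (0:ℝ) ≤ k * aT)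
      have : k * aT + η ^ 2 ≤ (Real.sqrt (k * aT) + η) ^ 2 := by nlinarith
      calc Real.sqrt (k * aT + η ^ 2) ≤ Real.sqrt ((Real.sqrt (k * aT) + η) ^ 2) :=
            Real.sqrt_le_sqrt this
        _ = Real.sqrt (k * aT) + η := Real.sqrt_sq (by positivity)
    have hfa : d t x₀ (s (p x₀)) ≤ ε / 3 := htf _ _ (by rw [hps])
    have hfb : d t (s (p x₁)) x₁ ≤ ε / 3 := by
      rw [hsymm]; exact htf _ _ (by rw [hps])
    obtain ⟨hlo, hhi⟩ := hcomp t htT (p x₀) (p x₁)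
    have hdY : dist (p x₀) (p x₁) ≤ C := hC _ _
    have hηC : η * dist (p x₀) (p x₁) ≤ ε / 3 := by
      calc η * dist (p x₀) (p x₁) ≤ η * (C + 1) := by
            apply mul_le_mul_of_nonneg_left (by linarith) hη.le
        _ = ε / 3 := by rw [hη_def]; field_simp
    rw [abs_le]
    constructor
    · -- lower: sqrt(kaT)·dist ≤ d + 2ε/3
      have h1 : d t (s (p x₀)) (s (p x₁)) ≤ d t (s (p x₀)) x₀ + d t x₀ x₁ + d t x₁ (s (p x₁)) := by
        calc d t (s (p x₀)) (s (p x₁)) ≤ d t (s (p x₀)) x₀ + d t x₀ (s (p x₁)) :=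
              htri _ _ _ _
          _ ≤ d t (s (p x₀)) x₀ + (d t x₀ x₁ + d t x₁ (s (p x₁))) := by
              linarith [htri t x₀ x₁ (s (p x₁))]
          _ = _ := by ring
      have h2 : d t (s (p x₀)) x₀ ≤ ε / 3 := by rw [hsymm]; exact hfa
      have h3 : d t x₁ (s (p x₁)) ≤ ε / 3 := by rw [hsymm]; exact hfb
      linarith
    · -- upper
      have h1 : d t x₀ x₁ ≤ d t x₀ (s (p x₀)) + d t (s (p x₀)) (s (p x₁)) + d t (s (p x₁)) x₁ := by
        calc d t x₀ x₁ ≤ d t x₀ (s (p x₀)) + d t (s (p x₀)) x₁ := htri _ _ _ _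
          _ ≤ d t x₀ (s (p x₀)) + (d t (s (p x₀)) (s (p x₁)) + d t (s (p x₁)) x₁) := by
              linarith [htri t (s (p x₀)) (s (p x₁)) x₁]
          _ = _ := by ring
      have h2 : d t (s (p x₀)) (s (p x₁)) ≤ (Real.sqrt (k * aT) + η) * dist (p x₀) (p x₁) :=
        hhi.trans (mul_le_mul_of_nonneg_right hsq dist_nonneg)
      have : d t x₀ x₁ ≤ ε / 3 + ((Real.sqrt (k * aT) + η) * dist (p x₀) (p x₁)) + ε / 3 := by
        linarith
      nlinarith [dist_nonneg (x := p x₀) (y := p x₁)]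
  · refine ⟨T - 1, by linarith, fun t _ _ x₀ => absurd ⟨p x₀⟩ hY⟩
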